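/- For every z ∈ ℂ, ∂(∂̄ q)(z) = 2·(1−|z|²)/(1+|z|²)³, where q : ℂ → ℂ is the function q(w) = (|w|²−1)/(|w|²+1) (coerced from ℝ to ℂ). (Equivalently, q is an eigenfunction of the Fubini–Study Laplacian: Δ_{ω_FS} q = −4q, since Δ_{ω_FS} = 2(1+|z|²)²·∂∂̄ in the coordinate z.) -/

import Mathlib

/-- The Wirtinger derivative `∂u`. -/
noncomputable def wdz (u : ℂ → ℂ) (z : ℂ) : ℂ :=
  (1 / 2) * (fderiv ℝ u z 1 - Complex.I • fderiv ℝ u z Complex.I)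

/-- The Wirtinger derivative `∂̄u`. -/
noncomputable def wdzbar (u : ℂ → ℂ) (z : ℂ) : ℂ :=
  (1 / 2) * (fderiv ℝ u z 1 + Complex.I • fderiv ℝ u z Complex.I)

noncomputable def nderiv (z : ℂ) : ℂ →L[ℝ] ℝ :=
  (2 * z.re) • Complex.reCLM + (2 * z.im) • Complex.imCLM

lemma hasFDerivAt_normSq' (z : ℂ) : HasFDerivAt Complex.normSq (nderiv z) z := by
  have hre := (Complex.reCLM.hasFDerivAt (x := z))
  have him := (Complex.imCLM.hasFDerivAt (x := z))
  have h := (hre.mul hre).add (him.mul him)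
  have hfun : (⇑Complex.normSq : ℂ → ℝ)
      = fun x => Complex.reCLM x * Complex.reCLM x + Complex.imCLM x * Complex.imCLM x := by
    funext x; simp [Complex.normSq_apply]
  have hder : nderiv z = (Complex.reCLM z • Complex.reCLM + Complex.reCLM z • Complex.reCLM +
      (Complex.imCLM z • Complex.imCLM + Complex.imCLM z • Complex.imCLM)) := by
    ext w
    simp only [nderiv, ContinuousLinearMap.add_apply, ContinuousLinearMap.smul_apply,
      Complex.reCLM_apply, Complex.imCLM_apply, smul_eq_mul]
    ring
  rw [hfun, hder]; exact h

lemma q_den_pos (z : ℂ) : (0 : ℝ) < Complex.normSq z + 1 :=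
  add_pos_of_nonneg_of_pos (Complex.normSq_nonneg z) one_pos

lemma hasFDerivAt_q (z : ℂ) :
    HasFDerivAt (fun v : ℂ => (((Complex.normSq v - 1) / (Complex.normSq v + 1) : ℝ) : ℂ))
      (Complex.ofRealCLM.comp ((2 / (Complex.normSq z + 1) ^ 2 : ℝ) • nderiv z)) z := by
  have hd : (Complex.normSq z + 1) ≠ 0 := (q_den_pos z).ne'
  have hg : HasDerivAt (fun t : ℝ => (t - 1) / (t + 1)) (2 / (Complex.normSq z + 1) ^ 2)
      (Complex.normSq z) := by
    have := (((hasDerivAt_id (Complex.normSq z)).sub_const 1).div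
      ((hasDerivAt_id (Complex.normSq z)).add_const 1) hd)
    exact this.congr_deriv (by simp only [id]; field_simp; ring)
  have h := hg.comp_hasFDerivAt z (hasFDerivAt_normSq' z)
  exact Complex.ofRealCLM.hasFDerivAt.comp z h

lemma wdzbar_q (w : ℂ) :
    wdzbar (fun v : ℂ =>
        (((‖v‖ ^ 2 - 1) / (‖v‖ ^ 2 + 1) : ℝ) : ℂ)) w
      = (2 * w) * (((((Complex.normSq w + 1) ^ 2)⁻¹ : ℝ)) : ℂ) := by
  have hq : (fun v : ℂ => (((‖v‖ ^ 2 - 1) / (‖v‖ ^ 2 + 1) : ℝ) : ℂ))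
      = (fun v : ℂ => (((Complex.normSq v - 1) / (Complex.normSq v + 1) : ℝ) : ℂ)) := by
    funext v; rw [Complex.sq_norm]
  rw [hq, wdzbar, (hasFDerivAt_q w).fderiv]
  have hd : ((Complex.normSq w : ℝ) : ℂ) + 1 ≠ 0 := by
    have : (((Complex.normSq w + 1 : ℝ)) : ℂ) ≠ 0 :=
      Complex.ofReal_ne_zero.mpr (q_den_pos w).ne'
    push_cast at this; exact this
  simp only [nderiv, ContinuousLinearMap.coe_comp', Function.comp_apply,
    ContinuousLinearMap.coe_smul', Pi.smul_apply, ContinuousLinearMap.add_apply,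
    ContinuousLinearMap.smul_apply, Complex.reCLM_apply, Complex.imCLM_apply,
    Complex.ofRealCLM_apply, Complex.one_re, Complex.one_im, Complex.I_re, Complex.I_im,
    smul_eq_mul, Complex.real_smul]
  push_cast
  field_simp
  linear_combination Complex.re_add_im w

lemma hasDerivAt_s (z : ℂ) :
    HasDerivAt (fun t : ℝ => ((t + 1) ^ 2)⁻¹) (-2 / (Complex.normSq z + 1) ^ 3)
      (Complex.normSq z) := by
  have hd : (Complex.normSq z + 1) ≠ 0 := (q_den_pos z).ne'
  have := (((hasDerivAt_id (Complex.normSq z)).add_const 1).pow 2).inv (pow_ne_zero 2 hd)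
  exact this.congr_deriv (by simp only [id, Pi.pow_apply]; push_cast; field_simp)

lemma hasFDerivAt_g (z : ℂ) :
    HasFDerivAt (fun w : ℂ => (2 * w) * (((((Complex.normSq w + 1) ^ 2)⁻¹ : ℝ)) : ℂ))
      ((2 * z) • (Complex.ofRealCLM.comp ((-2 / (Complex.normSq z + 1) ^ 3 : ℝ) • nderiv z))
        + ((((Complex.normSq z + 1) ^ 2)⁻¹ : ℝ) : ℂ) • ((2 : ℂ) • ContinuousLinearMap.id ℝ ℂ)) z := by
  have h1 : HasFDerivAt (fun w : ℂ => 2 * w) ((2 : ℂ) • ContinuousLinearMap.id ℝ ℂ) z :=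
    (hasFDerivAt_id z).const_mul (2 : ℂ)
  have h2 : HasFDerivAt (fun w : ℂ => (((((Complex.normSq w + 1) ^ 2)⁻¹ : ℝ)) : ℂ))
      (Complex.ofRealCLM.comp ((-2 / (Complex.normSq z + 1) ^ 3 : ℝ) • nderiv z)) z :=
    Complex.ofRealCLM.hasFDerivAt.comp z
      ((hasDerivAt_s z).comp_hasFDerivAt z (hasFDerivAt_normSq' z))
  exact h1.mul h2

theorem laplacian_eigenfunction_q (z : ℂ) :
    wdz (fun w : ℂ => wdzbar (fun v : ℂ =>
        (((‖v‖ ^ 2 - 1) / (‖v‖ ^ 2 + 1) : ℝ) : ℂ)) w) z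
      = 2 * (1 - (‖z‖ : ℂ) ^ 2) / (1 + (‖z‖ : ℂ) ^ 2) ^ 3 := by
  have hfun : (fun w : ℂ => wdzbar (fun v : ℂ =>
        (((‖v‖ ^ 2 - 1) / (‖v‖ ^ 2 + 1) : ℝ) : ℂ)) w)
      = fun w : ℂ => (2 * w) * (((((Complex.normSq w + 1) ^ 2)⁻¹ : ℝ)) : ℂ) := by
    funext w; exact wdzbar_q w
  rw [hfun, wdz, (hasFDerivAt_g z).fderiv]
  have habs : ((‖z‖ : ℂ)) ^ 2 = ((Complex.normSq z : ℝ) : ℂ) := by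
    rw [← Complex.ofReal_pow, Complex.sq_norm]
  rw [habs]
  have hd : ((Complex.normSq z : ℝ) : ℂ) + 1 ≠ 0 := by
    have : (((Complex.normSq z + 1 : ℝ)) : ℂ) ≠ 0 :=
      Complex.ofReal_ne_zero.mpr (q_den_pos z).ne'
    push_cast at this; exact this
  have hns : ((Complex.normSq z : ℝ) : ℂ) = (z.re : ℂ) ^ 2 + (z.im : ℂ) ^ 2 := by
    push_cast [Complex.normSq_apply]
    ring
  simp only [nderiv, ContinuousLinearMap.add_apply, ContinuousLinearMap.smul_apply,
    ContinuousLinearMap.coe_comp', Function.comp_apply, ContinuousLinearMap.coe_smul',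
    Pi.smul_apply, Complex.reCLM_apply, Complex.imCLM_apply, Complex.ofRealCLM_apply,
    ContinuousLinearMap.id_apply, Complex.one_re, Complex.one_im, Complex.I_re, Complex.I_im,
    smul_eq_mul, Complex.real_smul]
  push_cast
  have hd1 : (1 : ℂ) + ((Complex.normSq z : ℝ) : ℂ) ≠ 0 := by rwa [add_comm] at hd
  field_simp
  linear_combination (4 * (1 + ((Complex.normSq z : ℝ) : ℂ)) ^ 3 *
      ((z.re : ℂ) - (z.im : ℂ) * Complex.I)) * Complex.re_add_im z
    + ((1 + ((Complex.normSq z : ℝ) : ℂ)) ^ 3 *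
      (4 * (z.im : ℂ) ^ 2 - (1 + ((Complex.normSq z : ℝ) : ℂ)))) * Complex.I_sq
    + (4 * (1 + ((Complex.normSq z : ℝ) : ℂ)) ^ 3) * hns
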